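/- A profile is single-crossing on a tree T (whose vertices are the voters) if and only if for every path Q in T, the restriction of the profile to the voters on Q (in path order) is single-crossing with respect to that order. -/

import Mathlib

/-- A vote (linear order) over a finite set `A`, encoded as a ranking:
`v a < v b` means `a` is strictly preferred to `b`. -/
abbrev Vote (A : Type*) [Fintype A] := A ≃ Fin (Fintype.card A)

variable {A : Type*} [Fintype A] [DecidableEq A]

/-- The sequence of voters `L` is single-crossing in the given order: for every
pair of alternatives, the voters preferring one to the other occupy an
interval (convex set) of positions of `L`. -/
def SCList {n : ℕ} (P : Fin n → Vote A) (L : List (Fin n)) : Prop :=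
  ∀ a b : A, ∀ i j k : ℕ, ∀ hij : i ≤ j, ∀ hjk : j ≤ k, ∀ hk : k < L.length,
    P (L[i]'(by omega)) a < P (L[i]'(by omega)) b →
    P (L[k]'hk) a < P (L[k]'hk) b →
    P (L[j]'(by omega)) a < P (L[j]'(by omega)) b

section Aux

open SimpleGraph Walk

variable {V : Type*} {G : SimpleGraph V}

/-- A walk whose support lies in `S` yields reachability inside the induced graph. -/
lemma reachable_induce_of_support {S : Set V} :
    ∀ {u v : V} (p : G.Walk u v) (h : ∀ x ∈ p.support, x ∈ S),
      (G.induce S).Reachable ⟨u, h u p.start_mem_support⟩ ⟨v, h v p.end_mem_support⟩ := by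
  intro u v p
  induction p with
  | nil => intro h; rfl
  | @cons u w v huw q ih =>
    intro h
    have hw : w ∈ S := h w (by simp)
    have h' : ∀ x ∈ q.support, x ∈ S := fun x hx => h x (by simp [hx])
    have hadj : (G.induce S).Adj ⟨u, h u (by simp)⟩ ⟨w, hw⟩ := huw
    exact hadj.reachable.trans (by
      have := ih h'
      convert this using 2)

lemma support_takeUntil_dropUntil [DecidableEq V] {u v : V}
    {p : G.Walk u v} (hp : p.support.Nodup) {i : ℕ} (hi : i < p.support.length)
    (hx : p.support[i] ∈ p.support) :
    (p.takeUntil (p.support[i]) hx).support = p.support.take (i + 1) ∧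
    (p.dropUntil (p.support[i]) hx).support = p.support.drop i := by
  set x := p.support[i] with hxdef
  have hsplit := congrArg Walk.support (Walk.take_spec p hx)
  rw [Walk.support_append] at hsplit
  set t := (p.takeUntil x hx).support with ht
  set d := (p.dropUntil x hx).support with hd
  have htne : t ≠ [] := Walk.support_ne_nil _
  have hlast : t.getLast htne = x := Walk.getLast_support _
  have htlen : 0 < t.length := List.length_pos_iff.mpr htne
  have hlen : t.length = i + 1 := by
    have h1 : t.length - 1 < t.length := by omega
    have h2 : t.length - 1 < p.support.length := by
      rw [← hsplit, List.length_append]; omega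
    have h3 : p.support[t.length - 1]'h2 = x := by
      simp only [← hsplit]
      rw [List.getElem_append_left h1, ← List.getLast_eq_getElem htne, hlast]
    have := (hp.getElem_inj_iff (i := t.length - 1) (j := i) (hi := h2) (hj := hi)).mp
      (by rw [h3])
    omega
  have htake : p.support.take (i + 1) = t := by
    rw [← hsplit]; exact List.take_left' hlen
  have hdrop1 : p.support.drop (i + 1) = d.tail := by
    rw [← hsplit]; exact List.drop_left' hlen
  have hdcons : d = x :: d.tail := Walk.support_eq_cons _
  refine ⟨htake.symm, ?_⟩
  rw [List.drop_eq_getElem_cons hi, hdcons, hdrop1, ← hxdef]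

/-- In a tree, if the induced graph on `S` is preconnected, then any path whose
endpoints lie in `S` has all its support in `S`. -/
lemma path_support_subset_of_preconnected [DecidableEq V] (hT : G.IsTree) {S : Set V}
    (hS : (G.induce S).Preconnected) {u v : V} {p : G.Walk u v} (hp : p.IsPath)
    (hu : u ∈ S) (hv : v ∈ S) : ∀ x ∈ p.support, x ∈ S := by
  obtain ⟨W⟩ := hS ⟨u, hu⟩ ⟨v, hv⟩
  let W' : G.Walk u v := W.map (SimpleGraph.Embedding.induce S).toHom
  have hsub : ∀ x ∈ W'.support, x ∈ S := by
    intro x hx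
    rw [show W'.support = _ from Walk.support_map _ _] at hx
    obtain ⟨y, _, rfl⟩ := List.mem_map.mp hx
    exact y.2
  have hbp : W'.bypass.IsPath := Walk.bypass_isPath W'
  have huniq := hT.existsUnique_path u v
  have : p = W'.bypass := (huniq.unique hp hbp)
  intro x hx
  rw [this] at hx
  exact hsub x (Walk.support_bypass_subset W' hx)

end Aux

/-- A profile is single-crossing on a tree `G` on the voters iff for every path
in `G`, the restriction of the profile to the voters on the path (in path
order) is single-crossing with respect to that order. -/
theorem singleCrossing_on_tree_iff_paths {n : ℕ}
    (G : SimpleGraph (Fin n)) (hT : G.IsTree) (P : Fin n → Vote A) :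
    (∀ a b : A, (G.induce {i : Fin n | P i a < P i b}).Preconnected) ↔
    (∀ (u v : Fin n) (p : G.Walk u v), p.IsPath → SCList P p.support) := by
  constructor
  · intro h u v p hp a b i j k hij hjk hk hiab hkab
    set S : Set (Fin n) := {i : Fin n | P i a < P i b} with hSdef
    have hS := h a b
    have hnodup : p.support.Nodup := hp.support_nodup
    have hij' : i < p.support.length := by omega
    -- drop to position i
    have hmem : p.support[i] ∈ p.support := List.getElem_mem _
    obtain ⟨-, hqsup⟩ := support_takeUntil_dropUntil hnodup hij' hmem
    set q := p.dropUntil (p.support[i]) hmem with hq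
    have hqpath : q.IsPath := hp.dropUntil hmem
    have hqlen : q.support.length = p.support.length - i := by
      rw [hqsup, List.length_drop]
    have hki : k - i < q.support.length := by omega
    have hqk : q.support[k - i]'hki = p.support[k]'hk := by
      simp only [hqsup, List.getElem_drop]
      congr 1; omega
    have hymem : q.support[k - i]'hki ∈ q.support := List.getElem_mem _
    obtain ⟨hrsup, -⟩ := support_takeUntil_dropUntil hqpath.support_nodup hki hymem
    set r := q.takeUntil (q.support[k - i]'hki) hymem with hr
    have hrpath : r.IsPath := hqpath.takeUntil hymem
    -- the endpoints of r are in S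
    have hxS : p.support[i]'hij' ∈ S := hiab
    have hyS : q.support[k - i]'hki ∈ S := by rw [hqk]; exact hkab
    have hall := path_support_subset_of_preconnected hT hS hrpath hxS hyS
    -- p.support[j] belongs to r.support
    have hji : j - i < q.support.length := by omega
    have hqj : q.support[j - i]'hji = p.support[j]'(by omega) := by
      simp only [hqsup, List.getElem_drop]
      congr 1; omega
    have hjr : p.support[j]'(by omega) ∈ r.support := by
      rw [hrsup]
      have hji' : j - i < (q.support.take (k - i + 1)).length := by
        rw [List.length_take]; omega
      have : (q.support.take (k - i + 1))[j - i]'hji' = q.support[j - i]'hji := by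
        simp [List.getElem_take]
      rw [← hqj, ← this]
      exact List.getElem_mem _
    exact hall _ hjr
  · intro h a b
    set S : Set (Fin n) := {i : Fin n | P i a < P i b} with hSdef
    rintro ⟨u, hu⟩ ⟨v, hv⟩
    obtain ⟨w⟩ := hT.isConnected.preconnected u v
    have hp : w.bypass.IsPath := SimpleGraph.Walk.bypass_isPath w
    set p := w.bypass with hpdef
    have hlen : 0 < p.support.length := by
      have := SimpleGraph.Walk.support_ne_nil p
      exact List.length_pos_iff.mpr this
    have h0 : p.support[0]'hlen = u := by
      rw [List.getElem_zero]
      exact SimpleGraph.Walk.head_support p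
    have hlast : p.support[p.support.length - 1]'(by omega) = v := by
      rw [← List.getLast_eq_getElem (SimpleGraph.Walk.support_ne_nil p)]
      exact SimpleGraph.Walk.getLast_support p
    have hall : ∀ x ∈ p.support, x ∈ S := by
      intro x hx
      obtain ⟨j, hj, rfl⟩ := List.getElem_of_mem hx
      have := h u v p hp a b 0 j (p.support.length - 1) (by omega) (by omega) (by omega)
        (by rw [h0]; exact hu) (by rw [hlast]; exact hv)
      exact this
    have := reachable_induce_of_support p hall
    convert this using 2
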